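/- Let f, F be maps of open subsets of ℂ with F differentiable at z and f differentiable at F(z) (as real-differentiable maps ℂ → ℂ). If f satisfies ∂_z̄ f = μ̃₂ · conj(∂_z f) at F(z) and F satisfies ∂_z̄ F = μ₁ · ∂_z F at z, with |μ₁| < 1, |μ̃₂| ≤ 1, μ̃₂ real, then g = f ∘ F satisfies at z: ∂_z̄ g = ν₁ ∂_z g + ν₂ conj(∂_z g), where ν₁ = μ₁(1 − μ₂²)/(1 − |μ₁|²μ₂²), ν₂ = μ₂(1 − |μ₁|²)/(1 − |μ₁|²μ₂²), and μ₂ = μ̃₂ (evaluated at F(z)). -/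

import Mathlib

noncomputable def wirtingerD (h : ℂ → ℂ) (z : ℂ) : ℂ :=
  (fderiv ℝ h z 1 - Complex.I * fderiv ℝ h z Complex.I) / 2

noncomputable def wirtingerDBar (h : ℂ → ℂ) (z : ℂ) : ℂ :=
  (fderiv ℝ h z 1 + Complex.I * fderiv ℝ h z Complex.I) / 2

lemma linDecomp (L : ℂ →L[ℝ] ℂ) (v : ℂ) :
    L v = (L 1 - Complex.I * L Complex.I) / 2 * v
        + (L 1 + Complex.I * L Complex.I) / 2 * (starRingEnd ℂ) v := by
  have h1 : L v = (v.re : ℂ) * L 1 + (v.im : ℂ) * L Complex.I := by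
    conv_lhs => rw [← Complex.re_add_im v]
    rw [show ((v.re:ℂ) + v.im * Complex.I) = v.re • (1:ℂ) + v.im • Complex.I by
      simp only [Complex.real_smul]; ring]
    rw [map_add, L.map_smul, L.map_smul]
    simp only [Complex.real_smul]
  have hconj : (starRingEnd ℂ) v = (v.re:ℂ) - v.im * Complex.I := by
    simp [Complex.ext_iff]
  have hv : v = (v.re:ℂ) + v.im * Complex.I := (Complex.re_add_im v).symm
  rw [h1, hconj]
  nth_rewrite 3 [hv]
  linear_combination ((v.im : ℂ) * L Complex.I) * Complex.I_mul_I

lemma wD_comp (f F : ℂ → ℂ) (z : ℂ) (hF : DifferentiableAt ℝ F z)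
    (hf : DifferentiableAt ℝ f (F z)) :
    wirtingerD (f ∘ F) z = wirtingerD f (F z) * wirtingerD F z
      + wirtingerDBar f (F z) * (starRingEnd ℂ) (wirtingerDBar F z) := by
  unfold wirtingerD wirtingerDBar
  rw [fderiv_comp z hf hF]
  simp only [ContinuousLinearMap.comp_apply]
  rw [linDecomp (fderiv ℝ f (F z)) (fderiv ℝ F z 1),
      linDecomp (fderiv ℝ f (F z)) (fderiv ℝ F z Complex.I)]
  simp only [map_div₀, map_add, map_sub, map_mul, Complex.conj_I, map_ofNat]
  ring

lemma wDBar_comp (f F : ℂ → ℂ) (z : ℂ) (hF : DifferentiableAt ℝ F z)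
    (hf : DifferentiableAt ℝ f (F z)) :
    wirtingerDBar (f ∘ F) z = wirtingerD f (F z) * wirtingerDBar F z
      + wirtingerDBar f (F z) * (starRingEnd ℂ) (wirtingerD F z) := by
  unfold wirtingerD wirtingerDBar
  rw [fderiv_comp z hf hF]
  simp only [ContinuousLinearMap.comp_apply]
  rw [linDecomp (fderiv ℝ f (F z)) (fderiv ℝ F z 1),
      linDecomp (fderiv ℝ f (F z)) (fderiv ℝ F z Complex.I)]
  simp only [map_div₀, map_add, map_sub, map_mul, Complex.conj_I, map_ofNat]
  ring

theorem beltrami_composition (f F : ℂ → ℂ) (z : ℂ)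
    (hF : DifferentiableAt ℝ F z) (hf : DifferentiableAt ℝ f (F z))
    (μ1 : ℂ) (μ2 : ℝ) (hμ1 : ‖μ1‖ < 1) (hμ2 : |μ2| ≤ 1)
    (hfEq : wirtingerDBar f (F z) = (μ2 : ℂ) * (starRingEnd ℂ) (wirtingerD f (F z)))
    (hFEq : wirtingerDBar F z = μ1 * wirtingerD F z)
    (hne : wirtingerD F z ≠ 0)
    (ν1 ν2 : ℂ)
    (hν1 : ν1 = μ1 * (((1 - μ2 ^ 2) / (1 - ‖μ1‖ ^ 2 * μ2 ^ 2) : ℝ) : ℂ))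
    (hν2 : ν2 = (((μ2 * (1 - ‖μ1‖ ^ 2)) / (1 - ‖μ1‖ ^ 2 * μ2 ^ 2) : ℝ) : ℂ)) :
    wirtingerDBar (f ∘ F) z =
      ν1 * wirtingerD (f ∘ F) z + ν2 * (starRingEnd ℂ) (wirtingerD (f ∘ F) z) := by
  set a := wirtingerD f (F z) with ha
  set p := wirtingerD F z with hp
  have hg1 : wirtingerD (f ∘ F) z
      = a * p + (μ2:ℂ) * (starRingEnd ℂ) a * ((starRingEnd ℂ) μ1 * (starRingEnd ℂ) p) := by
    rw [wD_comp f F z hF hf, hfEq, hFEq]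
    simp only [map_mul]
    rfl
  have hg2 : wirtingerDBar (f ∘ F) z
      = a * (μ1 * p) + (μ2:ℂ) * (starRingEnd ℂ) a * (starRingEnd ℂ) p := by
    rw [wDBar_comp f F z hF hf, hfEq, hFEq]
  rw [hg1, hg2]
  have hDr : (0:ℝ) < 1 - ‖μ1‖ ^ 2 * μ2 ^ 2 := by
    have h1 : ‖μ1‖ ^ 2 < 1 := by nlinarith [norm_nonneg μ1]
    have h2 : μ2 ^ 2 ≤ 1 := by nlinarith [abs_nonneg μ2, _root_.sq_abs μ2]
    nlinarith [sq_nonneg (‖μ1‖), sq_nonneg μ2]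
  have habs : ((‖μ1‖ : ℂ))^2 = μ1 * (starRingEnd ℂ) μ1 := by
    rw [show ((‖μ1‖ : ℂ))^2 = ((‖μ1‖ ^ 2 : ℝ) : ℂ) by push_cast; ring,
      Complex.sq_norm, Complex.mul_conj]
  have hD' : (1 : ℂ) - μ1 * (starRingEnd ℂ) μ1 * (μ2:ℂ)^2 ≠ 0 := by
    rw [← habs]
    have : ((1 - ‖μ1‖ ^ 2 * μ2 ^ 2 : ℝ) : ℂ) ≠ 0 := by exact_mod_cast hDr.ne'
    push_cast at this
    convert this using 1
  rw [hν1, hν2]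
  push_cast
  simp only [map_add, map_mul, Complex.conj_conj, Complex.conj_ofReal]
  rw [habs]
  have hD'' : (1 : ℂ) - μ1 * (μ2:ℂ)^2 * (starRingEnd ℂ) μ1 ≠ 0 := by rw [mul_right_comm]; exact hD'
  field_simp
  ring
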